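/- Let d > 0 and let H = { m·((3/2)d, (√3/2)d) + n·((3/2)d, −(√3/2)d) + e·(d, 0) : m, n ∈ ℤ, e ∈ {0, 1} } ⊂ ℝ² be the hexagonal (honeycomb) grid with nearest-neighbor distance d. Let V = { z ∈ ℝ² : ‖z‖ ≤ ‖z − p‖ for every p ∈ H with p ≠ 0 } be the Voronoi cell of the origin (with the Euclidean norm). Then the area of V equals (3√3/4)d², and d is the greatest value of ‖z‖ over z ∈ V (it is attained and is an upper bound). Consequently, with λ = 4/(3√3 d²) and r_λ = d, the normalized maximum transmission range is r₁ = √λ · r_λ = 2/√(3√3). -/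

import Mathlib

open Real MeasureTheory Set

private lemma aux_far (d z0 z1 p0 p1 : ℝ) (hz : z0 ^ 2 + z1 ^ 2 ≤ d ^ 2)
    (hp : 4 * d ^ 2 ≤ p0 ^ 2 + p1 ^ 2) :
    2 * (z0 * p0 + z1 * p1) ≤ p0 ^ 2 + p1 ^ 2 := by
  nlinarith [sq_nonneg (z0 * p1 - z1 * p0), sq_nonneg (2 * (z0 * p0 + z1 * p1) - (p0 ^ 2 + p1 ^ 2)),
    sq_nonneg (p0 ^ 2 + p1 ^ 2 - 4 * d ^ 2), sq_nonneg d]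

private lemma aux_tri_norm (d x y : ℝ) (h1 : x ≤ d / 2)
    (h2 : Real.sqrt 3 * y ≤ d + x) (h3 : -(Real.sqrt 3 * y) ≤ d + x) :
    x ^ 2 + y ^ 2 ≤ d ^ 2 := by
  have hs : Real.sqrt 3 ^ 2 = 3 := Real.sq_sqrt (by norm_num)
  nlinarith [mul_nonneg (by linarith : (0:ℝ) ≤ d + x - Real.sqrt 3 * y)
    (by linarith : (0:ℝ) ≤ d + x + Real.sqrt 3 * y), sq_nonneg (2*x - d), sq_nonneg (x + d)]

private lemma aux_main (d z0 z1 : ℝ) (hd : 0 < d) (m n e : ℤ) (he : e = 0 ∨ e = 1)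
    (h1 : z0 ≤ d / 2) (h2 : Real.sqrt 3 * z1 ≤ d + z0) (h3 : -(Real.sqrt 3 * z1) ≤ d + z0)
    (hp : ¬((m : ℝ) * (3 / 2 * d) + n * (3 / 2 * d) + e * d = 0 ∧
        (m : ℝ) * (Real.sqrt 3 / 2 * d) - n * (Real.sqrt 3 / 2 * d) = 0)) :
    2 * (z0 * ((m : ℝ) * (3 / 2 * d) + n * (3 / 2 * d) + e * d)
        + z1 * ((m : ℝ) * (Real.sqrt 3 / 2 * d) - n * (Real.sqrt 3 / 2 * d)))
      ≤ ((m : ℝ) * (3 / 2 * d) + n * (3 / 2 * d) + e * d) ^ 2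
        + ((m : ℝ) * (Real.sqrt 3 / 2 * d) - n * (Real.sqrt 3 / 2 * d)) ^ 2 := by
  have hs : Real.sqrt 3 ^ 2 = 3 := Real.sq_sqrt (by norm_num)
  by_cases hbig : 16 ≤ (3 * (m + n) + 2 * e) ^ 2 + 3 * (m - n) ^ 2
  · apply aux_far d _ _ _ _ (aux_tri_norm d z0 z1 h1 h2 h3)
    have hc : (16 : ℝ) ≤ (3 * ((m:ℝ) + n) + 2 * e) ^ 2 + 3 * ((m:ℝ) - n) ^ 2 := by
      exact_mod_cast hbig
    have key : ((m : ℝ) * (3 / 2 * d) + n * (3 / 2 * d) + e * d) ^ 2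
        + ((m : ℝ) * (Real.sqrt 3 / 2 * d) - n * (Real.sqrt 3 / 2 * d)) ^ 2
        = ((3 * ((m:ℝ) + n) + 2 * e) ^ 2 + 3 * ((m:ℝ) - n) ^ 2) * d ^ 2 / 4 := by
      linear_combination (((m:ℝ) - n) ^ 2 * d ^ 2 / 4) * hs
    rw [key]
    nlinarith [mul_nonneg
      (by linarith : (0:ℝ) ≤ (3 * ((m:ℝ) + n) + 2 * e) ^ 2 + 3 * ((m:ℝ) - n) ^ 2 - 16)
      (sq_nonneg d)]
  · push_neg at hbig
    have hm1 : -1 ≤ m := by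
      rcases he with rfl | rfl <;>
        nlinarith [sq_nonneg (m+2*n), sq_nonneg (m+2*n+1), sq_nonneg (m+2), hbig]
    have hm2 : m ≤ 1 := by
      rcases he with rfl | rfl <;>
        nlinarith [sq_nonneg (m+2*n), sq_nonneg (m+2*n+1), sq_nonneg (m-2), hbig]
    have hn1 : -1 ≤ n := by
      rcases he with rfl | rfl <;>
        nlinarith [sq_nonneg (n+2*m), sq_nonneg (n+2*m+1), sq_nonneg (n+2), hbig]
    have hn2 : n ≤ 1 := by
      rcases he with rfl | rfl <;>
        nlinarith [sq_nonneg (n+2*m), sq_nonneg (n+2*m+1), sq_nonneg (n-2), hbig]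
    have hdz0 : d * z0 ≤ d * (d / 2) := mul_le_mul_of_nonneg_left h1 hd.le
    have hdz1 : d * (Real.sqrt 3 * z1) ≤ d * (d + z0) := mul_le_mul_of_nonneg_left h2 hd.le
    have hdz2 : d * (-(Real.sqrt 3 * z1)) ≤ d * (d + z0) := mul_le_mul_of_nonneg_left h3 hd.le
    have hs3d : Real.sqrt 3 ^ 2 * d ^ 2 = 3 * d ^ 2 := by rw [hs]
    interval_cases m <;> interval_cases n <;> rcases he with rfl | rfl <;>
      push_cast at hbig hp ⊢ <;>
      first
        | (exfalso; revert hbig; decide)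
        | (exfalso; apply hp; constructor <;> ring1)
        | linarith [hdz0, hdz1, hdz2, hs3d]

private def pt (a b : ℝ) : EuclideanSpace ℝ (Fin 2) := WithLp.toLp 2 ![a, b]

@[simp] private lemma pt_zero (a b : ℝ) : pt a b 0 = a := rfl
@[simp] private lemma pt_one (a b : ℝ) : pt a b 1 = b := rfl

private lemma aux_dist_iff (z p : EuclideanSpace ℝ (Fin 2)) :
    ‖z‖ ≤ ‖z - p‖ ↔ 2 * (z 0 * p 0 + z 1 * p 1) ≤ p 0 ^ 2 + p 1 ^ 2 := by
  rw [EuclideanSpace.norm_eq, EuclideanSpace.norm_eq]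
  rw [Real.sqrt_le_sqrt_iff (by positivity)]
  simp only [Fin.sum_univ_two, PiLp.sub_apply, Real.norm_eq_abs, sq_abs]
  constructor <;> intro h <;> nlinarith [h]

private lemma aux_norm_val (z : EuclideanSpace ℝ (Fin 2)) :
    ‖z‖ = Real.sqrt (z 0 ^ 2 + z 1 ^ 2) := by
  rw [EuclideanSpace.norm_eq]
  simp [Fin.sum_univ_two, sq_abs]

set_option maxHeartbeats 1000000 in
private lemma aux_triangle_volume (d : ℝ) (hd : 0 < d) :
    volume {q : ℝ × ℝ | q.1 ≤ d / 2 ∧ Real.sqrt 3 * q.2 ≤ d + q.1 ∧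
        -(Real.sqrt 3 * q.2) ≤ d + q.1}
      = ENNReal.ofReal (3 * Real.sqrt 3 / 4 * d ^ 2) := by
  have hs : Real.sqrt 3 ^ 2 = 3 := Real.sq_sqrt (by norm_num)
  have hs0 : (0:ℝ) < Real.sqrt 3 := by positivity
  set T2 : Set (ℝ × ℝ) := {q : ℝ × ℝ | q.1 ≤ d / 2 ∧ Real.sqrt 3 * q.2 ≤ d + q.1 ∧
      -(Real.sqrt 3 * q.2) ≤ d + q.1} with hT2
  set To : Set (ℝ × ℝ) := {q : ℝ × ℝ | -d < q.1 ∧ q.1 < d / 2 ∧ Real.sqrt 3 * q.2 < d + q.1 ∧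
      -(Real.sqrt 3 * q.2) < d + q.1} with hTo
  -- To is open
  have hToOpen : IsOpen To := by
    rw [hTo]
    have h1 : IsOpen {q : ℝ × ℝ | -d < q.1} := isOpen_lt continuous_const continuous_fst
    have h2 : IsOpen {q : ℝ × ℝ | q.1 < d / 2} := isOpen_lt continuous_fst continuous_const
    have h3 : IsOpen {q : ℝ × ℝ | Real.sqrt 3 * q.2 < d + q.1} :=
      isOpen_lt (continuous_const.mul continuous_snd) (continuous_const.add continuous_fst)
    have h4 : IsOpen {q : ℝ × ℝ | -(Real.sqrt 3 * q.2) < d + q.1} :=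
      isOpen_lt ((continuous_const.mul continuous_snd).neg) (continuous_const.add continuous_fst)
    exact h1.and (h2.and (h3.and h4))
  have hToSub : To ⊆ T2 := by
    rintro q ⟨_, a, b, c⟩; exact ⟨a.le, b.le, c.le⟩
  -- To = interior T2
  have hToInt : To = interior T2 := by
    apply subset_antisymm (interior_maximal hToSub hToOpen)
    intro q hq
    rw [mem_interior_iff_mem_nhds, Metric.mem_nhds_iff] at hq
    obtain ⟨ε, hε, hball⟩ := hq
    have key : ∀ u v : ℝ, u ^ 2 + v ^ 2 < ε ^ 2 → (q.1 + u, q.2 + v) ∈ T2 := by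
      intro u v huv
      apply hball
      rw [Metric.mem_ball, Prod.dist_eq]
      simp only [Real.dist_eq]
      rw [max_lt_iff]
      constructor <;>
        [ (rw [show q.1 + u - q.1 = u by ring]);
          (rw [show q.2 + v - q.2 = v by ring])] <;>
        · rw [abs_lt]
          constructor <;> nlinarith [sq_nonneg u, sq_nonneg v, abs_nonneg u]
    have k1 := key (ε/2) 0 (by nlinarith)
    have k2 := key 0 (ε/2) (by nlinarith)
    have k3 := key 0 (-(ε/2)) (by nlinarith)
    simp only [hT2, mem_setOf_eq] at k1 k2 k3
    have c2 : Real.sqrt 3 * q.2 < d + q.1 := by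
      have := k2.2.1
      have h' : Real.sqrt 3 * (q.2 + ε/2) = Real.sqrt 3 * q.2 + Real.sqrt 3 * (ε/2) := by ring
      nlinarith [mul_pos hs0 (by linarith : (0:ℝ) < ε/2)]
    have c3 : -(Real.sqrt 3 * q.2) < d + q.1 := by
      have := k3.2.2
      nlinarith [mul_pos hs0 (by linarith : (0:ℝ) < ε/2)]
    refine ⟨by linarith, by linarith [k1.1], c2, c3⟩
  -- T2 is convex
  have hconv : Convex ℝ T2 := by
    rintro x ⟨x1, x2, x3⟩ y ⟨y1, y2, y3⟩ a b ha hb hab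
    constructor
    · simp only [Prod.fst_add, Prod.smul_fst, smul_eq_mul]
      nlinarith [mul_le_mul_of_nonneg_left x1 ha, mul_le_mul_of_nonneg_left y1 hb]
    constructor
    · simp only [Prod.fst_add, Prod.snd_add, Prod.smul_fst, Prod.smul_snd, smul_eq_mul]
      nlinarith [mul_le_mul_of_nonneg_left x2 ha, mul_le_mul_of_nonneg_left y2 hb]
    · simp only [Prod.fst_add, Prod.snd_add, Prod.smul_fst, Prod.smul_snd, smul_eq_mul]
      nlinarith [mul_le_mul_of_nonneg_left x3 ha, mul_le_mul_of_nonneg_left y3 hb]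
  -- volume T2 = volume To
  have hfront : volume (frontier T2) = 0 := hconv.addHaar_frontier volume
  have hvol : volume T2 = volume To := by
    apply le_antisymm
    · calc volume T2 ≤ volume (interior T2 ∪ frontier T2) := by
            apply measure_mono
            intro q hq
            by_cases h : q ∈ interior T2
            · exact Or.inl h
            · exact Or.inr ⟨subset_closure hq, h⟩
        _ ≤ volume (interior T2) + volume (frontier T2) := measure_union_le _ _
        _ = volume To := by rw [hfront, ← hToInt, add_zero]
    · exact measure_mono hToSub
  rw [hvol]
  -- compute volume To via regionBetween
  have hreg : To
      = regionBetween (fun x => -((d + x) / Real.sqrt 3)) (fun x => (d + x) / Real.sqrt 3)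
          (Ioo (-d) (d/2)) := by
    ext ⟨x, y⟩
    simp only [hTo, regionBetween, mem_setOf_eq, mem_Ioo]
    constructor
    · rintro ⟨a, b, c, e⟩
      refine ⟨⟨a, b⟩, ?_, ?_⟩
      · rw [show -((d + x) / Real.sqrt 3) = (-(d + x)) / Real.sqrt 3 by ring,
          div_lt_iff₀ hs0]
        linarith [e]
      · rw [lt_div_iff₀ hs0]; linarith [c]
    · rintro ⟨⟨a, b⟩, c, e⟩
      have e' := (lt_div_iff₀ hs0).mp e
      have c' := mul_lt_mul_of_pos_left c hs0
      rw [mul_neg, mul_div_cancel₀ _ hs0.ne'] at c'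
      exact ⟨a, b, by linarith, by linarith⟩
  rw [hreg, Measure.volume_eq_prod]
  have hcont : Continuous (fun x : ℝ => (d + x) / Real.sqrt 3) :=
    (continuous_const.add continuous_id).div_const _
  have hcont' : Continuous (fun x : ℝ => -((d + x) / Real.sqrt 3)) := hcont.neg
  have hab : -d ≤ d / 2 := by linarith
  have hint : IntegrableOn (fun x : ℝ => (d + x) / Real.sqrt 3) (Ioo (-d) (d/2)) :=
    ((hcont.intervalIntegrable (-d) (d/2)).1).mono_set Ioo_subset_Ioc_self
  have hint' : IntegrableOn (fun x : ℝ => -((d + x) / Real.sqrt 3)) (Ioo (-d) (d/2)) :=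
    ((hcont'.intervalIntegrable (-d) (d/2)).1).mono_set Ioo_subset_Ioc_self
  rw [volume_regionBetween_eq_integral hint' hint measurableSet_Ioo
    (fun x hx => by
      have : 0 ≤ (d + x) / Real.sqrt 3 := by
        apply div_nonneg _ hs0.le
        have := hx.1; linarith
      linarith)]
  congr 1
  have : ∫ x in Ioo (-d) (d/2),
      ((fun x => (d + x) / Real.sqrt 3) - fun x => -((d + x) / Real.sqrt 3)) x
      = ∫ x in (-d)..(d/2), (2 / Real.sqrt 3) * (d + x) := by
    rw [intervalIntegral.integral_of_le hab, integral_Ioc_eq_integral_Ioo]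
    apply setIntegral_congr_fun measurableSet_Ioo
    intro x _
    simp only [Pi.sub_apply]
    field_simp
    ring
  rw [this, intervalIntegral.integral_const_mul,
    intervalIntegral.integral_add (intervalIntegrable_const) (intervalIntegral.intervalIntegrable_id),
    intervalIntegral.integral_const, integral_id]
  simp only [smul_eq_mul]
  rw [div_mul_eq_mul_div, div_eq_iff hs0.ne']
  ring_nf
  nlinarith [hs]

theorem hexagonal_grid_voronoi (d : ℝ) (hd : 0 < d)
    (H V : Set (EuclideanSpace ℝ (Fin 2)))
    (hH : H = {p : EuclideanSpace ℝ (Fin 2) |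
      ∃ m n e : ℤ, (e = 0 ∨ e = 1) ∧
        p 0 = m * (3 / 2 * d) + n * (3 / 2 * d) + e * d ∧
        p 1 = m * (Real.sqrt 3 / 2 * d) - n * (Real.sqrt 3 / 2 * d)})
    (hV : V = {z : EuclideanSpace ℝ (Fin 2) | ∀ p ∈ H, p ≠ 0 → ‖z‖ ≤ ‖z - p‖}) :
    volume V = ENNReal.ofReal (3 * Real.sqrt 3 / 4 * d ^ 2) ∧
    IsGreatest ((fun z : EuclideanSpace ℝ (Fin 2) => ‖z‖) '' V) d ∧
    Real.sqrt (4 / (3 * Real.sqrt 3 * d ^ 2)) * d = 2 / Real.sqrt (3 * Real.sqrt 3) := by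
  have hs : Real.sqrt 3 ^ 2 = 3 := Real.sq_sqrt (by norm_num)
  have hs0 : (0:ℝ) < Real.sqrt 3 := by positivity
  have hs3d : Real.sqrt 3 ^ 2 * d ^ 2 = 3 * d ^ 2 := by rw [hs]
  -- V is the triangle
  have hVT : V = {z : EuclideanSpace ℝ (Fin 2) |
      z 0 ≤ d / 2 ∧ Real.sqrt 3 * z 1 ≤ d + z 0 ∧ -(Real.sqrt 3 * z 1) ≤ d + z 0} := by
    rw [hV, hH]
    ext z
    simp only [mem_setOf_eq]
    constructor
    · intro h
      -- neighbor (d, 0)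
      have k1 : ‖z‖ ≤ ‖z - pt d 0‖ := by
        apply h _ ⟨0, 0, 1, Or.inr rfl, by push_cast; simp, by push_cast; simp⟩
        intro hcon
        have := congrFun (congrArg WithLp.ofLp hcon) 0
        simp at this
        exact hd.ne' this
      -- neighbor (-d/2, √3 d/2)
      have k2 : ‖z‖ ≤ ‖z - pt (-(d/2)) (Real.sqrt 3 * d / 2)‖ := by
        apply h _ ⟨0, -1, 1, Or.inr rfl, by push_cast; simp; ring, by push_cast; simp; ring⟩
        intro hcon
        have h1 := congrFun (congrArg WithLp.ofLp hcon) 1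
        simp only [pt_one] at h1
        have h2 : (0:ℝ) < Real.sqrt 3 * d / 2 := by positivity
        rw [show (0 : EuclideanSpace ℝ (Fin 2)) 1 = 0 from rfl] at h1
        exact h2.ne' h1
      -- neighbor (-d/2, -√3 d/2)
      have k3 : ‖z‖ ≤ ‖z - pt (-(d/2)) (-(Real.sqrt 3 * d / 2))‖ := by
        apply h _ ⟨-1, 0, 1, Or.inr rfl, by push_cast; simp; ring, by push_cast; simp; ring⟩
        intro hcon
        have h1 := congrFun (congrArg WithLp.ofLp hcon) 1
        simp only [pt_one] at h1
        have h2 : (0:ℝ) < Real.sqrt 3 * d / 2 := by positivity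
        rw [show (0 : EuclideanSpace ℝ (Fin 2)) 1 = 0 from rfl] at h1
        linarith
      rw [aux_dist_iff] at k1 k2 k3
      simp only [pt_zero, pt_one] at k1 k2 k3
      refine ⟨?_, ?_, ?_⟩
      · have h2 : d * (2 * z 0) ≤ d * d := by nlinarith [k1]
        have := (mul_le_mul_iff_right₀ hd).mp h2
        linarith
      · have h2 : d * (Real.sqrt 3 * z 1) ≤ d * (d + z 0) := by nlinarith [k2, hs3d]
        exact (mul_le_mul_iff_right₀ hd).mp h2
      · have h2 : d * (-(Real.sqrt 3 * z 1)) ≤ d * (d + z 0) := by nlinarith [k3, hs3d]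
        exact (mul_le_mul_iff_right₀ hd).mp h2
    · rintro ⟨h1, h2, h3⟩ p ⟨m, n, e, he, hp0, hp1⟩ hpne
      rw [aux_dist_iff, hp0, hp1]
      apply aux_main d (z 0) (z 1) hd m n e he h1 h2 h3
      rintro ⟨a, b⟩
      apply hpne
      ext i
      fin_cases i
      · simpa [hp0] using a
      · simpa [hp1] using b
  refine ⟨?_, ⟨?_, ?_⟩, ?_⟩
  · -- volume
    rw [hVT]
    have hmp1 := EuclideanSpace.volume_preserving_symm_measurableEquiv_toLp (Fin 2)
    have hmp2 := volume_preserving_finTwoArrow ℝ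
    set T2 : Set (ℝ × ℝ) := {q : ℝ × ℝ | q.1 ≤ d / 2 ∧ Real.sqrt 3 * q.2 ≤ d + q.1 ∧
        -(Real.sqrt 3 * q.2) ≤ d + q.1} with hT2def
    have hT2meas : MeasurableSet T2 := by
      apply MeasurableSet.inter
      · exact measurableSet_le measurable_fst measurable_const
      apply MeasurableSet.inter
      · exact measurableSet_le (measurable_const.mul measurable_snd)
          (measurable_const.add measurable_fst)
      · exact measurableSet_le (measurable_const.mul measurable_snd).neg
          (measurable_const.add measurable_fst)
    have hpre : {z : EuclideanSpace ℝ (Fin 2) |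
        z 0 ≤ d / 2 ∧ Real.sqrt 3 * z 1 ≤ d + z 0 ∧ -(Real.sqrt 3 * z 1) ≤ d + z 0}
        = (MeasurableEquiv.toLp 2 (Fin 2 → ℝ)).symm ⁻¹'
            ((MeasurableEquiv.finTwoArrow : (Fin 2 → ℝ) ≃ᵐ ℝ × ℝ) ⁻¹' T2) := by
      ext z
      simp [MeasurableEquiv.finTwoArrow, MeasurableEquiv.coe_toLp_symm, hT2def]
    rw [hpre, hmp1.measure_preimage, hmp2.measure_preimage hT2meas.nullMeasurableSet]
    · exact aux_triangle_volume d hd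
    · exact (hT2meas.preimage (MeasurableEquiv.measurable _)).nullMeasurableSet
  · -- d attained
    refine ⟨pt (d/2) (Real.sqrt 3 * d / 2), ?_, ?_⟩
    · rw [hVT]
      simp only [mem_setOf_eq, pt_zero, pt_one]
      refine ⟨le_refl _, ?_, ?_⟩ <;> nlinarith [hs, hs0, hd]
    · show ‖pt (d/2) (Real.sqrt 3 * d / 2)‖ = d
      rw [aux_norm_val]
      simp only [pt_zero, pt_one]
      rw [show (d/2) ^ 2 + (Real.sqrt 3 * d / 2) ^ 2 = d ^ 2 by linear_combination (d^2/4) * hs]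
      exact Real.sqrt_sq hd.le
  · -- upper bound
    rintro y ⟨z, hzV, rfl⟩
    rw [hVT] at hzV
    obtain ⟨h1, h2, h3⟩ := hzV
    have := aux_tri_norm d (z 0) (z 1) h1 h2 h3
    show ‖z‖ ≤ d
    rw [aux_norm_val]
    calc Real.sqrt (z 0 ^ 2 + z 1 ^ 2) ≤ Real.sqrt (d ^ 2) := Real.sqrt_le_sqrt this
      _ = d := Real.sqrt_sq hd.le
  · -- arithmetic
    have hX : (0:ℝ) < 3 * Real.sqrt 3 := by positivity
    have hXs : (0:ℝ) < Real.sqrt (3 * Real.sqrt 3) := Real.sqrt_pos.mpr hX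
    have key : 4 / (3 * Real.sqrt 3 * d ^ 2) = (2 / (Real.sqrt (3 * Real.sqrt 3) * d)) ^ 2 := by
      rw [div_pow, mul_pow, Real.sq_sqrt hX.le]
      norm_num
    rw [key, Real.sqrt_sq (by positivity)]
    field_simp
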